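/- Let G be a graph and L a list assignment with |L(v)| ≥ Δ(G) + 3 for all v. If G contains a path u–v–w–x where v and w both have degree 2 in G, and G − {v,w} admits a 2-distance L-coloring, then G admits a 2-distance L-coloring. -/
import Mathlib


open SimpleGraph

/-- Maximum average degree: the supremum over all nonempty subgraphs `H` of `2|E(H)|/|V(H)|`. -/
noncomputable def mad {V : Type} [Fintype V] (G : SimpleGraph V) : ℝ :=
  sSup {x : ℝ | ∃ H : G.Subgraph, H.verts.Nonempty ∧
    x = 2 * H.edgeSet.ncard / H.verts.ncard}

/-- Two distinct vertices are at distance at most 2. -/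
def TwoDistAdj {V : Type} (G : SimpleGraph V) (u v : V) : Prop :=
  u ≠ v ∧ (G.Adj u v ∨ ∃ w, G.Adj u w ∧ G.Adj w v)

/-- `φ` is a 2-distance coloring of `G` from the lists `L`: each vertex gets a color from
its list and vertices at distance at most 2 get distinct colors. -/
def IsTwoDistListColoring {V : Type} (G : SimpleGraph V) (L : V → Finset ℕ) (φ : V → ℕ) :
    Prop :=
  (∀ v, φ v ∈ L v) ∧ ∀ u v, TwoDistAdj G u v → φ u ≠ φ v

theorem extend_coloring_two_path
    {V : Type} [Fintype V] [DecidableEq V] (G : SimpleGraph V) [DecidableRel G.Adj]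
    (L : V → Finset ℕ) (hL : ∀ y, G.maxDegree + 3 ≤ (L y).card)
    (u v w x : V) (huv : G.Adj u v) (hvw : G.Adj v w) (hwx : G.Adj w x)
    (huw : u ≠ w) (hux : u ≠ x) (hvx : v ≠ x)
    (hdv : G.degree v = 2) (hdw : G.degree w = 2)
    (hcol : ∃ φ, IsTwoDistListColoring (G.induce {y | y ≠ v ∧ y ≠ w})
      (fun y => L y.1) φ) :
    ∃ φ : V → ℕ, IsTwoDistListColoring G L φ := by
  classical
  obtain ⟨φ₀, hmem0, hdist0⟩ := hcol
  have huvne : u ≠ v := huv.ne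
  have hxw : x ≠ w := hwx.ne'
  have hxv : x ≠ v := hvx.symm
  have hxu : x ≠ u := hux.symm
  have hNv : G.neighborFinset v = {u, w} := by
    symm
    apply Finset.eq_of_subset_of_card_le
    · intro z hz
      rw [SimpleGraph.mem_neighborFinset]
      simp only [Finset.mem_insert, Finset.mem_singleton] at hz
      rcases hz with rfl | rfl
      · exact huv.symm
      · exact hvw
    · have h1 : (G.neighborFinset v).card = 2 := by
        rw [SimpleGraph.card_neighborFinset_eq_degree]; exact hdv
      have h2 : ({u, w} : Finset V).card = 2 := by
        rw [Finset.card_insert_of_notMem (by simp [huw]), Finset.card_singleton]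
      omega
  have hNw : G.neighborFinset w = {v, x} := by
    symm
    apply Finset.eq_of_subset_of_card_le
    · intro z hz
      rw [SimpleGraph.mem_neighborFinset]
      simp only [Finset.mem_insert, Finset.mem_singleton] at hz
      rcases hz with rfl | rfl
      · exact hvw.symm
      · exact hwx
    · have h1 : (G.neighborFinset w).card = 2 := by
        rw [SimpleGraph.card_neighborFinset_eq_degree]; exact hdw
      have h2 : ({v, x} : Finset V).card = 2 := by
        rw [Finset.card_insert_of_notMem (by simp [hvx]), Finset.card_singleton]
      omega
  have hadj_v : ∀ z, G.Adj v z ↔ (z = u ∨ z = w) := by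
    intro z
    rw [← SimpleGraph.mem_neighborFinset, hNv]
    simp
  have hadj_w : ∀ z, G.Adj w z ↔ (z = v ∨ z = x) := by
    intro z
    rw [← SimpleGraph.mem_neighborFinset, hNw]
    simp
  set ψ : V → ℕ := fun y => if h : y ≠ v ∧ y ≠ w then φ₀ ⟨y, h⟩ else 0 with hψ
  set Sv : Finset V := insert u (insert x ((G.neighborFinset u).erase v)) with hSvdef
  set Sw : Finset V := insert u (insert x ((G.neighborFinset x).erase w)) with hSwdef
  have hSvcard : Sv.card ≤ G.maxDegree + 1 := by
    have h1 : ((G.neighborFinset u).erase v).card = G.degree u - 1 := by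
      rw [Finset.card_erase_of_mem ((G.mem_neighborFinset u v).mpr huv),
        SimpleGraph.card_neighborFinset_eq_degree]
    have h2 : 1 ≤ G.degree u := by
      rw [← SimpleGraph.card_neighborFinset_eq_degree]
      exact Finset.card_pos.mpr ⟨v, (G.mem_neighborFinset u v).mpr huv⟩
    have h3 : G.degree u ≤ G.maxDegree := G.degree_le_maxDegree u
    have h4 := Finset.card_insert_le x ((G.neighborFinset u).erase v)
    have h5 := Finset.card_insert_le u (insert x ((G.neighborFinset u).erase v))
    rw [hSvdef]
    omega
  have hSwcard : Sw.card ≤ G.maxDegree + 1 := by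
    have h1 : ((G.neighborFinset x).erase w).card = G.degree x - 1 := by
      rw [Finset.card_erase_of_mem ((G.mem_neighborFinset x w).mpr hwx.symm),
        SimpleGraph.card_neighborFinset_eq_degree]
    have h2 : 1 ≤ G.degree x := by
      rw [← SimpleGraph.card_neighborFinset_eq_degree]
      exact Finset.card_pos.mpr ⟨w, (G.mem_neighborFinset x w).mpr hwx.symm⟩
    have h3 : G.degree x ≤ G.maxDegree := G.degree_le_maxDegree x
    have h4 := Finset.card_insert_le x ((G.neighborFinset x).erase w)
    have h5 := Finset.card_insert_le u (insert x ((G.neighborFinset x).erase w))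
    rw [hSwdef]
    omega
  -- choose a for v
  have hav : ∃ a, a ∈ L v \ Sv.image ψ := by
    have h1 : (Sv.image ψ).card ≤ Sv.card := Finset.card_image_le
    have h2 := Finset.le_card_sdiff (Sv.image ψ) (L v)
    have h3 := hL v
    have : 0 < (L v \ Sv.image ψ).card := by omega
    exact Finset.card_pos.mp this
  obtain ⟨a, ha⟩ := hav
  rw [Finset.mem_sdiff] at ha
  -- choose b for w
  have hbw : ∃ b, b ∈ L w \ insert a (Sw.image ψ) := by
    have h1 : (Sw.image ψ).card ≤ Sw.card := Finset.card_image_le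
    have h0 := Finset.card_insert_le a (Sw.image ψ)
    have h2 := Finset.le_card_sdiff (insert a (Sw.image ψ)) (L w)
    have h3 := hL w
    have : 0 < (L w \ insert a (Sw.image ψ)).card := by omega
    exact Finset.card_pos.mp this
  obtain ⟨b, hb⟩ := hbw
  rw [Finset.mem_sdiff, Finset.mem_insert] at hb
  push_neg at hb
  -- symmetry of TwoDistAdj
  have hsymm : ∀ p q, TwoDistAdj G p q → TwoDistAdj G q p := by
    rintro p q ⟨h1, h2⟩
    refine ⟨h1.symm, ?_⟩
    rcases h2 with h | ⟨m, hm1, hm2⟩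
    · exact Or.inl h.symm
    · exact Or.inr ⟨m, hm2.symm, hm1.symm⟩
  -- key claims
  have hclaimv : ∀ z, z ≠ v → z ≠ w → TwoDistAdj G v z → z ∈ Sv := by
    rintro z hzv hzw ⟨hne, hcase⟩
    rcases hcase with h | ⟨m, hm1, hm2⟩
    · rcases (hadj_v z).mp h with rfl | rfl
      · exact Finset.mem_insert_self _ _
      · exact absurd rfl hzw
    · rcases (hadj_v m).mp hm1 with rfl | rfl
      · exact Finset.mem_insert_of_mem (Finset.mem_insert_of_mem
          (Finset.mem_erase.mpr ⟨hzv, (G.mem_neighborFinset _ z).mpr hm2⟩))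
      · rcases (hadj_w z).mp hm2 with rfl | rfl
        · exact absurd rfl hzv
        · exact Finset.mem_insert_of_mem (Finset.mem_insert_self _ _)
  have hclaimw : ∀ z, z ≠ v → z ≠ w → TwoDistAdj G w z → z ∈ Sw := by
    rintro z hzv hzw ⟨hne, hcase⟩
    rcases hcase with h | ⟨m, hm1, hm2⟩
    · rcases (hadj_w z).mp h with rfl | rfl
      · exact absurd rfl hzv
      · exact Finset.mem_insert_of_mem (Finset.mem_insert_self _ _)
    · rcases (hadj_w m).mp hm1 with rfl | rfl
      · rcases (hadj_v z).mp hm2 with rfl | rfl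
        · exact Finset.mem_insert_self _ _
        · exact absurd rfl hzw
      · exact Finset.mem_insert_of_mem (Finset.mem_insert_of_mem
          (Finset.mem_erase.mpr ⟨hzw, (G.mem_neighborFinset _ z).mpr hm2⟩))
  have hclaimold : ∀ (y z : V) (hy : y ≠ v ∧ y ≠ w) (hz : z ≠ v ∧ z ≠ w),
      TwoDistAdj G y z →
      TwoDistAdj (G.induce {p | p ≠ v ∧ p ≠ w}) ⟨y, hy⟩ ⟨z, hz⟩ := by
    rintro y z hy hz ⟨hne, hcase⟩
    refine ⟨fun h => hne (congrArg Subtype.val h), ?_⟩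
    rcases hcase with h | ⟨m, hm1, hm2⟩
    · exact Or.inl h
    · by_cases hmv : m = v
      · subst hmv
        rcases (hadj_v y).mp hm1.symm with rfl | rfl
        · rcases (hadj_v z).mp hm2 with rfl | rfl
          · exact absurd rfl hne
          · exact absurd rfl hz.2
        · exact absurd rfl hy.2
      · by_cases hmw : m = w
        · subst hmw
          rcases (hadj_w y).mp hm1.symm with rfl | rfl
          · exact absurd rfl hy.1
          · rcases (hadj_w z).mp hm2 with rfl | rfl
            · exact absurd rfl hz.1
            · exact absurd rfl hne
        · exact Or.inr ⟨⟨m, hmv, hmw⟩, hm1, hm2⟩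
  refine ⟨fun y => if y = v then a else if y = w then b else ψ y, ?_, ?_⟩
  · intro y
    by_cases hyv : y = v
    · simp only [if_pos hyv]
      rw [hyv]; exact ha.1
    · by_cases hyw : y = w
      · simp only [if_neg hyv, if_pos hyw]
        rw [hyw]; exact hb.1
      · simp only [if_neg hyv, if_neg hyw, hψ, dif_pos (And.intro hyv hyw)]
        exact hmem0 ⟨y, hyv, hyw⟩
  · intro y z hyz
    have hne := hyz.1
    by_cases hyv : y = v
    · by_cases hzw : z = w
      · have hzv : z ≠ v := by rw [hzw]; exact hvw.ne'
        simp only [if_pos hyv, if_neg hzv, if_pos hzw]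
        exact fun h => hb.2.1 h.symm
      · have hzv : z ≠ v := hyv ▸ hne.symm
        have hzSv : z ∈ Sv := hclaimv z hzv hzw (hyv ▸ hyz)
        simp only [if_pos hyv, if_neg hzv, if_neg hzw]
        exact fun h => ha.2 (Finset.mem_image.mpr ⟨z, hzSv, h.symm⟩)
    · by_cases hyw : y = w
      · by_cases hzv : z = v
        · simp only [if_neg hyv, if_pos hyw, if_pos hzv]
          exact hb.2.1
        · have hzw : z ≠ w := hyw ▸ hne.symm
          have hzSw : z ∈ Sw := hclaimw z hzv hzw (hyw ▸ hyz)
          simp only [if_neg hyv, if_pos hyw, if_neg hzv, if_neg hzw]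
          exact fun h => hb.2.2 (Finset.mem_image.mpr ⟨z, hzSw, h.symm⟩)
      · by_cases hzv : z = v
        · have hySv : y ∈ Sv := hclaimv y hyv hyw (hzv ▸ hsymm _ _ hyz)
          simp only [if_neg hyv, if_neg hyw, if_pos hzv]
          exact fun h => ha.2 (Finset.mem_image.mpr ⟨y, hySv, h⟩)
        · by_cases hzw : z = w
          · have hySw : y ∈ Sw := hclaimw y hyv hyw (hzw ▸ hsymm _ _ hyz)
            simp only [if_neg hyv, if_neg hyw, if_neg hzv, if_pos hzw]
            exact fun h => hb.2.2 (Finset.mem_image.mpr ⟨y, hySw, h⟩)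
          · have hkey := hdist0 ⟨y, hyv, hyw⟩ ⟨z, hzv, hzw⟩
              (hclaimold y z ⟨hyv, hyw⟩ ⟨hzv, hzw⟩ hyz)
            simp only [if_neg hyv, if_neg hyw, if_neg hzv, if_neg hzw, hψ,
              dif_pos (And.intro hyv hyw), dif_pos (And.intro hzv hzw)]
            exact hkey
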